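/- arXiv:2104.08406 — 3 statements merged into one kernel-verified Lean document; each statement's English description precedes it below -/
import Mathlib

section
/- If h: ℝ^n → ℝ is continuously differentiable with ∇h Lipschitz of constant L₁ on X + η𝔹, then for all x ∈ X, ‖∇h_η(x) − ∇h(x)‖ ≤ η L₁ n, where h_η is the spherical smoothing with parameter η. -/
open MeasureTheory Metric Set Pointwise Filter

noncomputable def ballUniform (n : ℕ) : Measure (EuclideanSpace ℝ (Fin n)) :=
  (volume (closedBall (0 : EuclideanSpace ℝ (Fin n)) 1))⁻¹ • volume.restrict (closedBall 0 1)

/-- Spherical smoothing: `h_η(x) = E_{u ∈ 𝔹}[h(x + η u)]` with `u` uniform on the unit ball. -/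
noncomputable def smoothed (n : ℕ) (η : ℝ) (h : EuclideanSpace ℝ (Fin n) → ℝ)
    (x : EuclideanSpace ℝ (Fin n)) : ℝ :=
  ∫ u, h (x + η • u) ∂(ballUniform n)

lemma ballUniform_prob (n : ℕ) : IsProbabilityMeasure (ballUniform n) := by
  have h0 : (volume (closedBall (0 : EuclideanSpace ℝ (Fin n)) 1)) ≠ 0 :=
    (measure_closedBall_pos volume (0 : EuclideanSpace ℝ (Fin n)) one_pos).ne'
  have hT : (volume (closedBall (0 : EuclideanSpace ℝ (Fin n)) 1)) ≠ ⊤ :=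
    (measure_closedBall_lt_top).ne
  constructor
  rw [ballUniform]
  simp [Measure.restrict_apply, ENNReal.inv_mul_cancel h0 hT]

set_option maxHeartbeats 1000000 in
theorem smoothed_gradient_close (n : ℕ) (X : Set (EuclideanSpace ℝ (Fin n))) (η L₁ : ℝ)
    (hη : 0 < η) (hL₁ : 0 ≤ L₁) (h : EuclideanSpace ℝ (Fin n) → ℝ)
    (hC1 : ContDiff ℝ 1 h)
    (hLipGrad : ∀ a ∈ X + closedBall (0 : EuclideanSpace ℝ (Fin n)) η,
      ∀ b ∈ X + closedBall (0 : EuclideanSpace ℝ (Fin n)) η,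
        ‖gradient h a - gradient h b‖ ≤ L₁ * ‖a - b‖) :
    ∀ x ∈ X, ‖gradient (smoothed n η h) x - gradient h x‖ ≤ η * L₁ * n := by
  intro x hx
  rcases Nat.eq_zero_or_pos n with hn | hn
  · subst hn
    have : gradient (smoothed 0 η h) x - gradient h x = 0 := Subsingleton.elim _ _
    simp [this]
  -- main case
  haveI : IsProbabilityMeasure (ballUniform n) := ballUniform_prob n
  have h0 : (volume (closedBall (0 : EuclideanSpace ℝ (Fin n)) 1)) ≠ 0 :=
    (measure_closedBall_pos volume (0 : EuclideanSpace ℝ (Fin n)) one_pos).ne'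
  have hd : Differentiable ℝ h := hC1.differentiable one_ne_zero
  have hfc : Continuous (fderiv ℝ h) := hC1.continuous_fderiv one_ne_zero
  -- a.e. u ∈ closedBall 0 1
  have hae : ∀ᵐ u ∂(ballUniform n), u ∈ closedBall (0 : EuclideanSpace ℝ (Fin n)) 1 := by
    rw [ballUniform]
    exact Measure.ae_smul_measure (ae_restrict_mem measurableSet_closedBall) _
  -- bound for fderiv on a compact set
  obtain ⟨C, hC⟩ := (isCompact_closedBall x (1 + η)).exists_bound_of_continuousOn
    (hfc.continuousOn (s := closedBall x (1 + η)))
  -- differentiation under the integral sign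
  have key : HasFDerivAt (smoothed n η h)
      (∫ u, fderiv ℝ h (x + η • u) ∂(ballUniform n)) x := by
    apply hasFDerivAt_integral_of_dominated_of_fderiv_le (bound := fun _ => C)
      (F' := fun x' u => fderiv ℝ h (x' + η • u)) (s := ball x 1) (ball_mem_nhds x one_pos)
    · filter_upwards with x'
      exact (Continuous.aestronglyMeasurable (by fun_prop))
    · rw [ballUniform]
      refine Integrable.smul_measure ?_ (ENNReal.inv_ne_top.mpr h0)
      exact ((Continuous.continuousOn (by fun_prop)).integrableOn_compact
        (isCompact_closedBall _ _))
    · exact (Continuous.aestronglyMeasurable (by fun_prop))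
    · filter_upwards [hae] with u hu x' hx'
      apply hC
      have h2 : ‖η • u‖ ≤ η := by
        rw [norm_smul, Real.norm_eq_abs, abs_of_pos hη]
        nlinarith [mem_closedBall_zero_iff.mp hu]
      have h1 : ‖x' - x‖ ≤ 1 := le_of_lt (mem_ball.mp hx')
      have : ‖x' + η • u - x‖ ≤ 1 + η := by
        calc ‖x' + η • u - x‖ = ‖(x' - x) + η • u‖ := by rw [add_sub_right_comm]
          _ ≤ ‖x' - x‖ + ‖η • u‖ := norm_add_le _ _
          _ ≤ 1 + η := add_le_add h1 h2
      simpa [dist_eq_norm] using this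
    · exact integrable_const C
    · filter_upwards with u x' hx'
      have := ((hd (x' + η • u)).hasFDerivAt).comp x'
        ((hasFDerivAt_id x').add_const (η • u))
      simpa [Function.comp_def] using this
  -- integrability of the derivative family
  have hint : Integrable (fun u => fderiv ℝ h (x + η • u)) (ballUniform n) := by
    rw [ballUniform]
    refine Integrable.smul_measure (f := fun u => fderiv ℝ h (x + η • u))
      (μ := volume.restrict (closedBall (0 : EuclideanSpace ℝ (Fin n)) 1)) ?_ (ENNReal.inv_ne_top.mpr h0)
    exact ((Continuous.continuousOn (by fun_prop)).integrableOn_compact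
      (isCompact_closedBall _ _))
  have hfd : fderiv ℝ (smoothed n η h) x
      = ∫ u, fderiv ℝ h (x + η • u) ∂(ballUniform n) := key.fderiv
  -- relate gradient to fderiv
  have hgrad_eq : ∀ (g : EuclideanSpace ℝ (Fin n) → ℝ) (y : EuclideanSpace ℝ (Fin n)),
      gradient g y = (InnerProductSpace.toDual ℝ (EuclideanSpace ℝ (Fin n))).symm
        (fderiv ℝ g y) := fun g y => rfl
  have hnorm : ‖gradient (smoothed n η h) x - gradient h x‖
      = ‖(∫ u, fderiv ℝ h (x + η • u) ∂(ballUniform n)) - fderiv ℝ h x‖ := by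
    rw [hgrad_eq, hgrad_eq, ← map_sub, LinearIsometryEquiv.norm_map, hfd]
  rw [hnorm]
  -- rewrite constant as integral
  have hconst : fderiv ℝ h x = ∫ _u, fderiv ℝ h x ∂(ballUniform n) := by simp
  rw [hconst, ← integral_sub hint (integrable_const _)]
  have hbound : ∀ᵐ u ∂(ballUniform n),
      ‖fderiv ℝ h (x + η • u) - fderiv ℝ h x‖ ≤ η * L₁ := by
    filter_upwards [hae] with u hu
    have hmem1 : x + η • u ∈ X + closedBall (0 : EuclideanSpace ℝ (Fin n)) η := by
      refine ⟨x, hx, η • u, ?_, rfl⟩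
      rw [mem_closedBall_zero_iff, norm_smul, Real.norm_eq_abs, abs_of_pos hη]
      nlinarith [mem_closedBall_zero_iff.mp hu]
    have hmem2 : x ∈ X + closedBall (0 : EuclideanSpace ℝ (Fin n)) η :=
      ⟨x, hx, 0, by simp [le_of_lt hη], by simp⟩
    have hlip := hLipGrad _ hmem1 _ hmem2
    have heqn : ‖fderiv ℝ h (x + η • u) - fderiv ℝ h x‖
        = ‖gradient h (x + η • u) - gradient h x‖ := by
      rw [hgrad_eq, hgrad_eq, ← map_sub, LinearIsometryEquiv.norm_map]
    rw [heqn]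
    have hns : ‖x + η • u - x‖ = η * ‖u‖ := by
      simp [norm_smul, abs_of_pos hη]
    calc ‖gradient h (x + η • u) - gradient h x‖ ≤ L₁ * ‖x + η • u - x‖ := hlip
      _ = L₁ * (η * ‖u‖) := by rw [hns]
      _ ≤ η * L₁ := by
        nlinarith [mul_nonneg (mul_nonneg hL₁ hη.le)
          (sub_nonneg.mpr (mem_closedBall_zero_iff.mp hu))]
  have hle := norm_integral_le_of_norm_le_const hbound
  simp only [probReal_univ, mul_one] at hle
  calc ‖∫ u, (fderiv ℝ h (x + η • u) - fderiv ℝ h x) ∂(ballUniform n)‖ ≤ η * L₁ := hle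
    _ ≤ η * L₁ * n := by
      have hn1 : (1 : ℝ) ≤ (n : ℝ) := by exact_mod_cast hn
      nlinarith [mul_nonneg (le_of_lt hη) hL₁]
end

section
/- Let h be L₀-Lipschitz on X + η𝔹 and define the zeroth-order gradient estimator g_η(x, v) := (n/η)·(h(x+v) − h(x))·v/‖v‖ for v ∈ η𝕊. Then for every x ∈ X, E_{v∈η𝕊}[‖g_η(x, v)‖²] ≤ L₀² n². -/
open MeasureTheory Metric Set Pointwise Filter

/-- Uniform distribution on the sphere of radius `η`: pushforward of the uniform ball
distribution under radial projection `u ↦ (η/‖u‖) • u`. -/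
noncomputable def sphereUniform (n : ℕ) (η : ℝ) : Measure (EuclideanSpace ℝ (Fin n)) :=
  Measure.map (fun u => (η / ‖u‖) • u) (ballUniform n)

lemma radial_measurable (n : ℕ) (η : ℝ) :
    Measurable (fun u : EuclideanSpace ℝ (Fin n) => (η / ‖u‖) • u) :=
  (measurable_const.div measurable_norm).smul measurable_id

lemma sphereUniform_prob (n : ℕ) (η : ℝ) : IsProbabilityMeasure (sphereUniform n η) := by
  have := ballUniform_prob n
  exact Measure.isProbabilityMeasure_map (radial_measurable n η).aemeasurable

theorem zeroth_order_second_moment (n : ℕ) (X : Set (EuclideanSpace ℝ (Fin n))) (η L₀ : ℝ)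
    (hη : 0 < η) (hL₀ : 0 ≤ L₀) (h : EuclideanSpace ℝ (Fin n) → ℝ)
    (hLip : ∀ a ∈ X + closedBall (0 : EuclideanSpace ℝ (Fin n)) η,
      ∀ b ∈ X + closedBall (0 : EuclideanSpace ℝ (Fin n)) η, |h a - h b| ≤ L₀ * ‖a - b‖) :
    ∀ x ∈ X,
      ∫ v, ‖(((n : ℝ) / η) * (h (x + v) - h x) / ‖v‖) • v‖ ^ 2 ∂(sphereUniform n η) ≤
        L₀ ^ 2 * n ^ 2 := by
  intro x hx
  have hprob := sphereUniform_prob n η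
  set g : EuclideanSpace ℝ (Fin n) → ℝ :=
    fun v => ‖(((n : ℝ) / η) * (h (x + v) - h x) / ‖v‖) • v‖ ^ 2 with hg
  have hgnonneg : ∀ v, 0 ≤ g v := fun v => sq_nonneg _
  have hCnonneg : (0 : ℝ) ≤ L₀ ^ 2 * n ^ 2 := by positivity
  -- a.e. on the pushforward, v is on the sphere or zero
  have hmem : ∀ᵐ v ∂(sphereUniform n η),
      v ∈ sphere (0 : EuclideanSpace ℝ (Fin n)) η ∪ {0} := by
    rw [ae_iff]
    have hset : {v : EuclideanSpace ℝ (Fin n) | ¬ v ∈ sphere (0 : EuclideanSpace ℝ (Fin n)) η ∪ {0}}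
        = (sphere (0 : EuclideanSpace ℝ (Fin n)) η ∪ {0})ᶜ := rfl
    rw [hset, sphereUniform, Measure.map_apply (radial_measurable n η)
      (isClosed_sphere.measurableSet.union (measurableSet_singleton 0)).compl]
    have : (fun u : EuclideanSpace ℝ (Fin n) => (η / ‖u‖) • u) ⁻¹'
        (sphere (0 : EuclideanSpace ℝ (Fin n)) η ∪ {0})ᶜ = ∅ := by
      ext u
      simp only [Set.mem_preimage, Set.mem_compl_iff, Set.mem_empty_iff_false, iff_false,
        not_not]
      refine ?_
      show (η / ‖u‖) • u ∈ _
      by_cases hu : u = 0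
      · right; simp [hu]
      · left
        have hn : ‖u‖ ≠ 0 := norm_ne_zero_iff.mpr hu
        simp only [mem_sphere_iff_norm, sub_zero, norm_smul, Real.norm_eq_abs,
          abs_div, abs_norm]
        rw [abs_of_pos hη]
        field_simp
    rw [this, measure_empty]
  -- pointwise bound on sphere ∪ {0}
  have hbound : ∀ᵐ v ∂(sphereUniform n η), ‖g v‖ ≤ L₀ ^ 2 * n ^ 2 := by
    filter_upwards [hmem] with v hv
    rw [Real.norm_eq_abs, abs_of_nonneg (hgnonneg v)]
    rcases hv with hv | hv
    · -- ‖v‖ = η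
      have hvnorm : ‖v‖ = η := by simpa using hv
      have hxv : x + v ∈ X + closedBall (0 : EuclideanSpace ℝ (Fin n)) η := by
        exact Set.add_mem_add hx (by simp [mem_closedBall, hvnorm.le])
      have hxm : x ∈ X + closedBall (0 : EuclideanSpace ℝ (Fin n)) η := by
        have := Set.add_mem_add hx
          (show (0 : EuclideanSpace ℝ (Fin n)) ∈ closedBall 0 η by simp [hη.le])
        simpa using this
      have hdiff : |h (x + v) - h x| ≤ L₀ * η := by
        have := hLip _ hxv _ hxm
        simpa [hvnorm] using this
      have : ‖(((n : ℝ) / η) * (h (x + v) - h x) / ‖v‖) • v‖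
          = ((n : ℝ) / η) * |h (x + v) - h x| := by
        rw [norm_smul, Real.norm_eq_abs, hvnorm, abs_div, abs_mul, abs_div,
          abs_of_pos hη, abs_of_nonneg (n.cast_nonneg : (0:ℝ) ≤ n)]
        field_simp
      rw [hg]
      simp only [this]
      calc ((n : ℝ) / η * |h (x + v) - h x|) ^ 2
          ≤ ((n : ℝ) / η * (L₀ * η)) ^ 2 := by
            apply pow_le_pow_left₀ (by positivity)
            exact mul_le_mul_of_nonneg_left hdiff (by positivity)
        _ = L₀ ^ 2 * n ^ 2 := by field_simp
    · simp only [Set.mem_singleton_iff] at hv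
      simp [hg, hv, hCnonneg]
  calc ∫ v, g v ∂(sphereUniform n η) ≤ ‖∫ v, g v ∂(sphereUniform n η)‖ :=
        le_abs_self _
    _ ≤ (L₀ ^ 2 * n ^ 2) * ((sphereUniform n η) Set.univ).toReal :=
        norm_integral_le_of_norm_le_const hbound
    _ = L₀ ^ 2 * n ^ 2 := by simp
end

section
/- Let X ⊆ ℝ^n be nonempty, closed and convex, f: ℝ^n → ℝ continuously differentiable with ∇f Lipschitz of constant L on X, and γ ∈ (0, 1/L). Let x⁺ := Π_X[x − γ(∇f(x) + e)] for some error vector e. Then f(x⁺) ≤ f(x) + (−1 + Lγ)·(γ/4)·‖G_{1/γ}(x)‖² + (1 − Lγ/2)·γ·‖e‖², where G_{1/γ}(x) := (1/γ)(x − Π_X[x − γ∇f(x)]). -/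
open Metric Set
open scoped RealInnerProductSpace
set_option maxHeartbeats 1000000

theorem descent_step_bound (n : ℕ) (X : Set (EuclideanSpace ℝ (Fin n)))
    (hXc : Convex ℝ X) (hXcl : IsClosed X) (hXne : X.Nonempty)
    (f : EuclideanSpace ℝ (Fin n) → ℝ) (hf : ContDiff ℝ 1 f)
    (L : ℝ) (hL : 0 < L)
    (hLipGrad : ∀ a ∈ X, ∀ b ∈ X, ‖gradient f a - gradient f b‖ ≤ L * ‖a - b‖)
    (γ : ℝ) (hγ0 : 0 < γ) (hγL : γ < 1 / L)
    (proj : EuclideanSpace ℝ (Fin n) → EuclideanSpace ℝ (Fin n))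
    (hproj : ∀ u, proj u ∈ X ∧ ∀ z ∈ X, ‖u - proj u‖ ≤ ‖u - z‖)
    (x : EuclideanSpace ℝ (Fin n)) (hx : x ∈ X) (e : EuclideanSpace ℝ (Fin n)) :
    f (proj (x - γ • (gradient f x + e))) ≤
      f x + (-1 + L * γ) * (γ / 4) * ‖γ⁻¹ • (x - proj (x - γ • gradient f x))‖ ^ 2 +
        (1 - L * γ / 2) * γ * ‖e‖ ^ 2 := by
  -- variational inequality for the projection
  have hVI : ∀ u, ∀ z ∈ X, ⟪u - proj u, z - proj u⟫ ≤ 0 := by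
    intro u
    have hmem := (hproj u).1
    have hmin := (hproj u).2
    haveI : Nonempty X := ⟨⟨proj u, hmem⟩⟩
    rw [← norm_eq_iInf_iff_real_inner_le_zero hXc hmem]
    refine le_antisymm (le_ciInf fun w => hmin w w.2) ?_
    have hbdd : BddBelow (Set.range fun w : X => ‖u - ↑w‖) := by
      refine ⟨0, ?_⟩
      rintro r ⟨w, rfl⟩
      exact norm_nonneg _
    exact ciInf_le hbdd ⟨proj u, hmem⟩
  set g := gradient f x with hg
  set xp := proj (x - γ • (g + e)) with hxp
  set p := proj (x - γ • g) with hp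
  have hxpX : xp ∈ X := (hproj _).1
  have hpX : p ∈ X := (hproj _).1
  set v := xp - x with hv
  set A := ‖xp - x‖ with hA
  set B := ‖x - p‖ with hB
  set E := ‖e‖ with hE
  set ig := ⟪g, v⟫ with hig
  -- derivative of t ↦ f (x + t • v)
  have hdiff : ∀ y, DifferentiableAt ℝ f y := fun y => (hf.differentiable one_ne_zero) y
  have hderiv : ∀ t : ℝ, HasDerivAt (fun s : ℝ => f (x + s • v))
      ⟪gradient f (x + t • v), v⟫ t := by
    intro t
    have h1 : HasDerivAt (fun s : ℝ => x + s • v) v t := by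
      simpa using ((hasDerivAt_id t).smul_const v).const_add x
    have h2 := ((hdiff (x + t • v)).hasGradientAt.hasFDerivAt).comp_hasDerivAt t h1
    refine h2.congr_deriv ?_
    simp [InnerProductSpace.toDual_apply_apply]
  set φ : ℝ → ℝ := fun t => f (x + t • v) - t * ig - L / 2 * t ^ 2 * ‖v‖ ^ 2 with hφ
  have hφd : ∀ t : ℝ, HasDerivAt φ
      (⟪gradient f (x + t • v), v⟫ - ig - L * t * ‖v‖ ^ 2) t := by
    intro t
    have h3 : HasDerivAt (fun s : ℝ => s * ig) ig t := hasDerivAt_mul_const ig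
    have h4 : HasDerivAt (fun s : ℝ => L / 2 * s ^ 2 * ‖v‖ ^ 2)
        (L * t * ‖v‖ ^ 2) t := by
      have := ((hasDerivAt_pow 2 t).const_mul (L / 2)).mul_const (‖v‖ ^ 2)
      refine this.congr_deriv ?_
      ring
    exact ((hderiv t).sub h3).sub h4
  -- descent lemma
  have hanti : AntitoneOn φ (Icc (0:ℝ) 1) := by
    apply antitoneOn_of_deriv_nonpos (convex_Icc 0 1)
    · exact fun t _ => (hφd t).continuousAt.continuousWithinAt
    · exact fun t _ => (hφd t).differentiableAt.differentiableWithinAt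
    · intro t ht
      rw [interior_Icc, mem_Ioo] at ht
      rw [(hφd t).deriv]
      have hmem : x + t • v ∈ X := by
        have h := hXc hx hxpX (by linarith : (0:ℝ) ≤ 1 - t) ht.1.le (by ring)
        convert h using 1
        rw [hv]; module
      have hlip := hLipGrad (x + t • v) hmem x hx
      have h5 : ‖x + t • v - x‖ = t * ‖v‖ := by
        rw [add_sub_cancel_left, norm_smul, Real.norm_eq_abs, abs_of_pos ht.1]
      rw [h5] at hlip
      have h6 : ⟪gradient f (x + t • v), v⟫ - ig = ⟪gradient f (x + t • v) - g, v⟫ := by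
        rw [inner_sub_left, hig]
      have h7 : ⟪gradient f (x + t • v) - g, v⟫ ≤ ‖gradient f (x + t • v) - g‖ * ‖v‖ :=
        real_inner_le_norm _ _
      nlinarith [norm_nonneg v, mul_le_mul_of_nonneg_right hlip (norm_nonneg v)]
  have hφ10 : φ 1 ≤ φ 0 := hanti (by norm_num) (by norm_num) zero_le_one
  have hdesc : f xp ≤ f x + ig + L / 2 * A ^ 2 := by
    have h0 : x + (0:ℝ) • v = x := by simp
    have h1 : x + (1:ℝ) • v = xp := by rw [hv]; module
    have hAv : ‖v‖ = A := by rw [hv]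
    simp only [hφ, h0, h1, hAv] at hφ10
    nlinarith [hφ10]
  -- main variational inequality at z = x
  have hvi : A ^ 2 ≤ γ * (-ig) + γ * ⟪e, x - xp⟫ := by
    have h := hVI (x - γ • (g + e)) x hx
    rw [← hxp] at h
    have heq : x - γ • (g + e) - xp = (x - xp) - γ • g - γ • e := by module
    rw [heq, inner_sub_left, inner_sub_left, real_inner_smul_left, real_inner_smul_left,
      real_inner_self_eq_norm_sq] at h
    have h8 : ‖x - xp‖ = A := norm_sub_rev x xp ▸ rfl
    have h9 : ⟪g, x - xp⟫ = -ig := by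
      rw [hig, hv, (neg_sub xp x).symm, inner_neg_right]
    rw [h8, h9] at h
    linarith
  have hie : ⟪e, x - xp⟫ ≤ E * A := by
    have := real_inner_le_norm e (x - xp)
    have h8 : ‖x - xp‖ = A := norm_sub_rev x xp ▸ rfl
    rw [h8] at this
    exact this
  -- near-nonexpansiveness: ‖xp - p‖ ≤ γ * E
  have hnear : ‖xp - p‖ ≤ γ * E := by
    have h1 := hVI (x - γ • (g + e)) p hpX
    have h2 := hVI (x - γ • g) xp hxpX
    rw [← hxp] at h1
    rw [← hp] at h2
    have e1 : x - γ • (g + e) - xp = (x - γ • g - p) + (p - xp) - γ • e := by module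
    rw [e1, inner_sub_left, inner_add_left, real_inner_smul_left,
      real_inner_self_eq_norm_sq] at h1
    have e2 : ⟪x - γ • g - p, xp - p⟫ = -⟪x - γ • g - p, p - xp⟫ := by
      rw [(neg_sub p xp).symm, inner_neg_right]
    rw [e2] at h2
    have key : ‖p - xp‖ ^ 2 ≤ γ * ⟪e, p - xp⟫ := by linarith
    have hbd : ⟪e, p - xp⟫ ≤ E * ‖p - xp‖ := real_inner_le_norm e (p - xp)
    have hrev : ‖xp - p‖ = ‖p - xp‖ := norm_sub_rev xp p
    rw [hrev]
    by_contra hcon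
    push_neg at hcon
    have h0 : 0 < ‖p - xp‖ :=
      lt_of_le_of_lt (mul_nonneg hγ0.le (norm_nonneg e)) hcon
    nlinarith [mul_le_mul_of_nonneg_left hbd hγ0.le]
  have htri : B ≤ A + γ * E := by
    have := norm_sub_le_norm_sub_add_norm_sub x xp p
    have h8 : ‖x - xp‖ = A := norm_sub_rev x xp ▸ rfl
    calc B ≤ ‖x - xp‖ + ‖xp - p‖ := this
    _ ≤ A + γ * E := by rw [h8]; linarith
  -- algebra
  have hc : L * γ - 1 < 0 := by
    rw [lt_div_iff₀ hL] at hγL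
    linarith
  have key2 : γ * f xp - γ * f x ≤ (L * γ / 2 - 1 / 2) * A ^ 2 + γ ^ 2 / 2 * E ^ 2 := by
    nlinarith [mul_le_mul_of_nonneg_left hdesc hγ0.le,
      mul_le_mul_of_nonneg_left hie hγ0.le, sq_nonneg (γ * E - A), hvi]
  have hB2 : B ^ 2 ≤ (A + γ * E) ^ 2 := by
    have := pow_le_pow_left₀ (norm_nonneg (x - p)) htri 2
    exact this
  have hA2 : B ^ 2 / 2 - γ ^ 2 * E ^ 2 ≤ A ^ 2 := by
    nlinarith [sq_nonneg (A - γ * E)]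
  have hmul : (L * γ / 2 - 1 / 2) * A ^ 2 ≤
      (L * γ / 2 - 1 / 2) * (B ^ 2 / 2 - γ ^ 2 * E ^ 2) :=
    mul_le_mul_of_nonpos_left hA2 (by linarith)
  have hnorm : ‖γ⁻¹ • (x - p)‖ = γ⁻¹ * B := by
    rw [norm_smul, Real.norm_eq_abs, abs_of_pos (inv_pos.mpr hγ0)]
  rw [hnorm]
  rw [← mul_le_mul_iff_right₀ hγ0]
  have h1 : γ * ((-1 + L * γ) * (γ / 4) * (γ⁻¹ * B) ^ 2) =
      (L * γ / 2 - 1 / 2) * (B ^ 2 / 2) := by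
    field_simp
    ring
  nlinarith [key2, hmul, h1]
end
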